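/- arXiv:math/0212174 — 2 statements merged into one kernel-verified Lean document; each statement's English description precedes it below -/
import Mathlib

section
/- Let p > 0 and suppose there exist constants k, K > 0 and exponents q ≥ r ≥ 0 such that k|y|^r ≤ |s(y)| ≤ K|y|^q for all |y| ≥ 1, and suppose p < r. If ∫_ℝ |y|^{p+q-r} ν(dy) < ∞, then ∫_0^∞ z^{p-1}(ν₊(z)+ν₋(z)) dz < ∞; and if ∫_0^∞ z^{p-1}(ν₊(z)+ν₋(z)) dz < ∞, then ∫_ℝ |y|^p ν(dy) < ∞. -/
open MeasureTheory Set Filter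
open scoped ENNReal NNReal Classical

/-- The function `c_Y` of the paper: `c_Y y = ∫_{[0,∞)} min(s(y),s(w)) ν(dw)` for `y ≥ 0`,
`c_Y y = ∫_{(-∞,0)} min(|s(y)|,|s(w)|) ν(dw)` for `y < 0`. -/
noncomputable def cY (s : ℝ → ℝ) (ν : Measure ℝ) (y : ℝ) : ℝ :=
  if 0 ≤ y then ∫ w in Ici (0 : ℝ), min (s y) (s w) ∂ν
  else ∫ w in Iio (0 : ℝ), min |s y| |s w| ∂ν

/-- The slope `(c_Y(z) - c_Y(-y))/(s(z) - s(-y))` in the definition of `ζ₊, ρ₊`. -/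
noncomputable def slopeYPlus (s : ℝ → ℝ) (ν : Measure ℝ) (z y : ℝ) : ℝ :=
  (cY s ν z - cY s ν (-y)) / (s z - s (-y))

/-- The slope `(c_Y(y) - c_Y(-z))/(s(y) - s(-z))` in the definition of `ζ₋, ρ₋`. -/
noncomputable def slopeYMinus (s : ℝ → ℝ) (ν : Measure ℝ) (z y : ℝ) : ℝ :=
  (cY s ν y - cY s ν (-z)) / (s y - s (-z))

/-- The set of `y > 0` attaining the infimum in the definition of `ρ₊(z)`. -/
def argYPlus (s : ℝ → ℝ) (ν : Measure ℝ) (z : ℝ) : Set ℝ :=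
  {y | 0 < y ∧ ∀ x, 0 < x → slopeYPlus s ν z y ≤ slopeYPlus s ν z x}

/-- The set of `y > 0` attaining the supremum in the definition of `ρ₋(z)`. -/
def argYMinus (s : ℝ → ℝ) (ν : Measure ℝ) (z : ℝ) : Set ℝ :=
  {y | 0 < y ∧ ∀ x, 0 < x → slopeYMinus s ν z x ≤ slopeYMinus s ν z y}

/-- `ζ₊(z) = -inf_{y>0} (c_Y(z)-c_Y(-y))/(s(z)-s(-y))` if attained, `0` otherwise. -/
noncomputable def zetaPlus (s : ℝ → ℝ) (ν : Measure ℝ) (z : ℝ) : ℝ :=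
  if (argYPlus s ν z).Nonempty then -sInf (slopeYPlus s ν z '' Ioi 0) else 0

/-- `ζ₋(z) = sup_{y>0} (c_Y(y)-c_Y(-z))/(s(y)-s(-z))` if attained, `0` otherwise. -/
noncomputable def zetaMinus (s : ℝ → ℝ) (ν : Measure ℝ) (z : ℝ) : ℝ :=
  if (argYMinus s ν z).Nonempty then sSup (slopeYMinus s ν z '' Ioi 0) else 0

/-- `ν₊(z) = ζ₊(z) + ν([z,∞))`, the tail distribution function of the supremum of the
stopped process for the optimal embedding. -/
noncomputable def nuPlus (s : ℝ → ℝ) (ν : Measure ℝ) (z : ℝ) : ℝ :=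
  zetaPlus s ν z + (ν (Ici z)).toReal

/-- `ν₋(z) = ν((-∞,-z]) + ζ₋(z)`, the tail distribution function of minus the infimum of
the stopped process for the optimal embedding. -/
noncomputable def nuMinus (s : ℝ → ℝ) (ν : Measure ℝ) (z : ℝ) : ℝ :=
  (ν (Iic (-z))).toReal + zetaMinus s ν z

section Helpers
open Topology

lemma integrableOn_min_const {ν : Measure ℝ} [IsFiniteMeasure ν] {g : ℝ → ℝ} {S : Set ℝ}
    (hS : MeasurableSet S) (hg : Measurable g) (hgnn : ∀ w ∈ S, 0 ≤ g w) {t : ℝ} (ht : 0 ≤ t) :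
    IntegrableOn (fun w => min t (g w)) S ν := by
  apply Integrable.mono' (integrable_const t) ((measurable_const.min hg).aestronglyMeasurable)
  filter_upwards [ae_restrict_mem hS] with w hw
  rw [Real.norm_eq_abs, abs_of_nonneg (le_min ht (hgnn w hw))]
  exact min_le_left _ _

lemma ratio_le {ν : Measure ℝ} [IsFiniteMeasure ν] {g : ℝ → ℝ} {S : Set ℝ}
    (hS : MeasurableSet S) (hg : Measurable g) (hgnn : ∀ w ∈ S, 0 ≤ g w)
    {b t : ℝ} (hb : 0 < b) (ht : 0 < t) :
    b * ∫ w in S, min t (g w) ∂ν ≤ (b + t) * ∫ w in S, min b (g w) ∂ν := by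
  rw [← integral_const_mul, ← integral_const_mul]
  apply setIntegral_mono_on
  · exact (integrableOn_min_const hS hg hgnn ht.le).const_mul _
  · exact (integrableOn_min_const hS hg hgnn hb.le).const_mul _
  · exact hS
  · intro w hw
    have h0 := hgnn w hw
    rcases le_total (g w) b with h | h
    · rw [min_eq_right h]
      nlinarith [min_le_right t (g w)]
    · rw [min_eq_left h]
      nlinarith [min_le_left t (g w)]


section Zeta

variable {s : ℝ → ℝ} {ν : Measure ℝ}

lemma cY_nonneg (hmono : Monotone s) (hs0 : s 0 = 0) (y : ℝ) : 0 ≤ cY s ν y := by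
  unfold cY
  split_ifs with h
  · exact setIntegral_nonneg measurableSet_Ici fun w hw =>
      le_min (hs0 ▸ hmono h) (hs0 ▸ hmono hw)
  · exact setIntegral_nonneg measurableSet_Iio fun w _ => le_min (abs_nonneg _) (abs_nonneg _)

lemma sInf_slope_eq {z y₀ : ℝ} (hmem : y₀ ∈ argYPlus s ν z) :
    sInf (slopeYPlus s ν z '' Ioi 0) = slopeYPlus s ν z y₀ :=
  IsLeast.csInf_eq ⟨⟨y₀, hmem.1, rfl⟩, by rintro v ⟨x, hx, rfl⟩; exact hmem.2 x hx⟩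

lemma sSup_slope_eq {z y₀ : ℝ} (hmem : y₀ ∈ argYMinus s ν z) :
    sSup (slopeYMinus s ν z '' Ioi 0) = slopeYMinus s ν z y₀ :=
  IsGreatest.csSup_eq ⟨⟨y₀, hmem.1, rfl⟩, by rintro v ⟨x, hx, rfl⟩; exact hmem.2 x hx⟩

lemma zetaPlus_nonneg (hmono : StrictMono s) (hs0 : s 0 = 0)
    (htend : Tendsto (fun x : ℝ => s (-x)) atTop atBot) {z : ℝ} (hz : 0 < z) :
    0 ≤ zetaPlus s ν z := by
  unfold zetaPlus
  split_ifs with h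
  · obtain ⟨y₀, hy₀⟩ := h
    rw [sInf_slope_eq hy₀, neg_nonneg]
    have hden : ∀ x : ℝ, 0 < x → 0 < s z - s (-x) := fun x hx =>
      sub_pos.2 (hmono (by linarith))
    have hb : ∀ x : ℝ, 0 < x →
        slopeYPlus s ν z x ≤ cY s ν z / (s z - s (-x)) := by
      intro x hx
      unfold slopeYPlus
      exact (div_le_div_iff_of_pos_right (hden x hx)).2
        (sub_le_self _ (cY_nonneg hmono.monotone hs0 (-x)))
    have hdtop : Tendsto (fun x : ℝ => s z - s (-x)) atTop atTop := by
      have := tendsto_neg_atBot_atTop.comp htend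
      simpa [Function.comp, sub_eq_add_neg] using tendsto_atTop_add_const_left atTop (s z) this
    have htt : Tendsto (fun x : ℝ => cY s ν z / (s z - s (-x))) atTop (𝓝 0) :=
      Tendsto.div_atTop tendsto_const_nhds hdtop
    refine ge_of_tendsto htt ?_
    filter_upwards [eventually_gt_atTop 0] with x hx
    exact (hy₀.2 x hx).trans (hb x hx)
  · exact le_refl 0

lemma zetaPlus_le [IsProbabilityMeasure ν] (hs : Continuous s) (hmono : StrictMono s)
    (hs0 : s 0 = 0) {z : ℝ} (hz : 0 < z) :
    zetaPlus s ν z ≤ (∫ w in Iio (0:ℝ), min (s z) |s w| ∂ν) / s z := by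
  have hsz : 0 < s z := hs0 ▸ hmono hz
  have hH0 : 0 ≤ ∫ w in Iio (0:ℝ), min (s z) |s w| ∂ν :=
    setIntegral_nonneg measurableSet_Iio fun w _ => le_min hsz.le (abs_nonneg _)
  unfold zetaPlus
  split_ifs with h
  · obtain ⟨y₀, hy₀⟩ := h
    rw [sInf_slope_eq hy₀]
    have hty : s (-y₀) < 0 := by
      have : s (-y₀) < s 0 := hmono (by linarith [hy₀.1])
      linarith [hs0 ▸ this]
    set t := -s (-y₀) with hts
    have ht : 0 < t := by simp [hts]; linarith
    have hcy : cY s ν (-y₀) = ∫ w in Iio (0:ℝ), min t |s w| ∂ν := by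
      rw [cY, if_neg (by linarith [hy₀.1]), abs_of_neg hty]
    have hden : s z - s (-y₀) = s z + t := by rw [hts]; ring
    unfold slopeYPlus
    rw [← neg_div, neg_sub, hden]
    calc (cY s ν (-y₀) - cY s ν z) / (s z + t)
        ≤ cY s ν (-y₀) / (s z + t) :=
          (div_le_div_iff_of_pos_right (by linarith)).2
            (sub_le_self _ (cY_nonneg hmono.monotone hs0 z))
      _ ≤ _ := by
          rw [hcy, div_le_div_iff₀ (by linarith) hsz]
          have := ratio_le (ν := ν) (g := fun w => |s w|) (S := Iio 0) measurableSet_Iio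
            (hs.measurable.abs) (fun w _ => abs_nonneg _) hsz ht
          linear_combination this
  · positivity

lemma zetaPlus_le_one [IsProbabilityMeasure ν] (hs : Continuous s) (hmono : StrictMono s)
    (hs0 : s 0 = 0) {z : ℝ} (hz : 0 < z) : zetaPlus s ν z ≤ 1 := by
  have hsz : 0 < s z := hs0 ▸ hmono hz
  refine (zetaPlus_le hs hmono hs0 hz).trans ?_
  rw [div_le_one hsz]
  calc ∫ w in Iio (0:ℝ), min (s z) |s w| ∂ν
      ≤ ∫ _ in Iio (0:ℝ), s z ∂ν := by
        apply setIntegral_mono_on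
          (integrableOn_min_const measurableSet_Iio hs.measurable.abs
            (fun w _ => abs_nonneg _) hsz.le)
          (integrableOn_const (measure_ne_top _ _) enorm_ne_top) measurableSet_Iio
        exact fun w _ => min_le_left _ _
    _ ≤ s z := by
        rw [setIntegral_const, smul_eq_mul, measureReal_def]
        nlinarith [ENNReal.toReal_le_of_le_ofReal zero_le_one
          (le_trans (prob_le_one (μ := ν) (s := Iio 0)) (by simp)),
          (ν (Iio 0)).toReal_nonneg]

lemma zetaMinus_nonneg [IsProbabilityMeasure ν] (hmono : StrictMono s) (hs0 : s 0 = 0)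
    (htop : Tendsto s atTop atTop) {z : ℝ} (hz : 0 < z) :
    0 ≤ zetaMinus s ν z := by
  unfold zetaMinus
  split_ifs with h
  · obtain ⟨y₀, hy₀⟩ := h
    rw [sSup_slope_eq hy₀]
    have hden : ∀ x : ℝ, 0 < x → 0 < s x - s (-z) := fun x hx =>
      sub_pos.2 (hmono (by linarith))
    have hb : ∀ x : ℝ, 0 < x →
        (-cY s ν (-z)) / (s x - s (-z)) ≤ slopeYMinus s ν z x := by
      intro x hx
      unfold slopeYMinus
      exact (div_le_div_iff_of_pos_right (hden x hx)).2
        (by linarith [cY_nonneg (ν := ν) hmono.monotone hs0 x])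
    have hdtop : Tendsto (fun x : ℝ => s x - s (-z)) atTop atTop :=
      tendsto_atTop_add_const_right atTop (-s (-z)) htop
    have htt : Tendsto (fun x : ℝ => (-cY s ν (-z)) / (s x - s (-z))) atTop (𝓝 0) :=
      Tendsto.div_atTop tendsto_const_nhds hdtop
    refine le_of_tendsto htt ?_
    filter_upwards [eventually_gt_atTop 0] with x hx
    exact (hb x hx).trans (hy₀.2 x hx)
  · exact le_refl 0

lemma zetaMinus_le [IsProbabilityMeasure ν] (hs : Continuous s) (hmono : StrictMono s)
    (hs0 : s 0 = 0) {z : ℝ} (hz : 0 < z) :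
    zetaMinus s ν z ≤ (∫ w in Ici (0:ℝ), min (-s (-z)) (s w) ∂ν) / (-s (-z)) := by
  have hsz : s (-z) < 0 := by
    have : s (-z) < s 0 := hmono (by linarith)
    linarith [hs0 ▸ this]
  set b := -s (-z) with hbs
  have hb : 0 < b := by simp [hbs]; linarith
  have hH0 : 0 ≤ ∫ w in Ici (0:ℝ), min b (s w) ∂ν :=
    setIntegral_nonneg measurableSet_Ici fun w hw => le_min hb.le (hs0 ▸ hmono.monotone hw)
  unfold zetaMinus
  split_ifs with h
  · obtain ⟨y₀, hy₀⟩ := h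
    rw [sSup_slope_eq hy₀]
    have hty : 0 < s y₀ := hs0 ▸ hmono hy₀.1
    set t := s y₀ with hts
    have hcy : cY s ν y₀ = ∫ w in Ici (0:ℝ), min t (s w) ∂ν := by
      rw [cY, if_pos hy₀.1.le]
    have hden : s y₀ - s (-z) = b + t := by rw [hbs, hts]; ring
    unfold slopeYMinus
    rw [hden]
    calc (cY s ν y₀ - cY s ν (-z)) / (b + t)
        ≤ cY s ν y₀ / (b + t) :=
          (div_le_div_iff_of_pos_right (by linarith)).2
            (sub_le_self _ (cY_nonneg hmono.monotone hs0 (-z)))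
      _ ≤ _ := by
          rw [hcy, div_le_div_iff₀ (by linarith) hb]
          have := ratio_le (ν := ν) (g := s) (S := Ici 0) measurableSet_Ici
            (hs.measurable) (fun w hw => hs0 ▸ hmono.monotone hw) hb hty
          linear_combination this
  · positivity

lemma zetaMinus_le_one [IsProbabilityMeasure ν] (hs : Continuous s) (hmono : StrictMono s)
    (hs0 : s 0 = 0) {z : ℝ} (hz : 0 < z) : zetaMinus s ν z ≤ 1 := by
  have hsz : s (-z) < 0 := by
    have : s (-z) < s 0 := hmono (by linarith)
    linarith [hs0 ▸ this]
  have hb : (0:ℝ) < -s (-z) := by linarith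
  refine (zetaMinus_le hs hmono hs0 hz).trans ?_
  rw [div_le_one hb]
  calc ∫ w in Ici (0:ℝ), min (-s (-z)) (s w) ∂ν
      ≤ ∫ _ in Ici (0:ℝ), -s (-z) ∂ν := by
        apply setIntegral_mono_on
          (integrableOn_min_const measurableSet_Ici hs.measurable
            (fun w hw => hs0 ▸ hmono.monotone hw) hb.le)
          (integrableOn_const (measure_ne_top _ _) enorm_ne_top) measurableSet_Ici
        exact fun w _ => min_le_left _ _
    _ ≤ -s (-z) := by
        rw [setIntegral_const, smul_eq_mul, measureReal_def]
        nlinarith [ENNReal.toReal_le_of_le_ofReal zero_le_one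
          (le_trans (prob_le_one (μ := ν) (s := Ici 0)) (by simp)),
          (ν (Ici (0:ℝ))).toReal_nonneg]

end Zeta

section Calc

lemma lintegral_Ioc_rpow_le {p T : ℝ} (hp : 0 < p) (hT : 1 ≤ T) :
    ∫⁻ z in Ioc (1:ℝ) T, ENNReal.ofReal (z ^ (p-1)) ≤ ENNReal.ofReal (T ^ p / p) := by
  have hint : IntegrableOn (fun z : ℝ => z ^ (p-1)) (Ioc 1 T) := by
    have := (intervalIntegral.intervalIntegrable_rpow' (a := 1) (b := T)
      (by linarith : (-1:ℝ) < p - 1))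
    rwa [intervalIntegrable_iff_integrableOn_Ioc_of_le hT] at this
  rw [← ofReal_integral_eq_lintegral_ofReal hint ?nn]
  case nn =>
    filter_upwards [ae_restrict_mem measurableSet_Ioc] with z hz
    exact Real.rpow_nonneg (by linarith [hz.1]) _
  apply ENNReal.ofReal_le_ofReal
  rw [← intervalIntegral.integral_of_le hT, integral_rpow (Or.inl (by linarith))]
  have h1 : (1:ℝ) ^ (p - 1 + 1) = 1 := Real.one_rpow _
  rw [sub_add_cancel, Real.one_rpow]
  have := Real.rpow_nonneg (le_trans zero_le_one hT) p
  rw [div_le_div_iff₀ hp hp]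
  nlinarith

lemma calc_aux {p r : ℝ} (hp : 0 < p) (hpr : p < r) {a : ℝ} (ha : 0 ≤ a) :
    ∫⁻ z in Ioi (1:ℝ), ENNReal.ofReal (z ^ (p-1) * min 1 (a / z ^ r)) ≤
      ENNReal.ofReal ((1/p + 1/(r-p)) * (1 + a ^ (p/r))) := by
  have hr : 0 < r := hp.trans hpr
  set T : ℝ := max 1 (a ^ (1/r)) with hTdef
  have hT1 : (1:ℝ) ≤ T := le_max_left _ _
  have hT0 : (0:ℝ) < T := lt_of_lt_of_le one_pos hT1
  have hsplit : (Ioi (1:ℝ)) = Ioc 1 T ∪ Ioi T := (Ioc_union_Ioi_eq_Ioi hT1).symm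
  rw [hsplit, lintegral_union measurableSet_Ioi Ioc_disjoint_Ioi_same]
  have h1 : ∫⁻ z in Ioc (1:ℝ) T, ENNReal.ofReal (z ^ (p-1) * min 1 (a / z ^ r)) ≤
      ENNReal.ofReal (T ^ p / p) := by
    refine le_trans (setLIntegral_mono (by fun_prop) ?_) (lintegral_Ioc_rpow_le hp hT1)
    intro z hz
    apply ENNReal.ofReal_le_ofReal
    have hz0 : (0:ℝ) < z := lt_trans one_pos hz.1
    nlinarith [Real.rpow_nonneg hz0.le (p-1), min_le_left 1 (a / z ^ r)]
  have h2 : ∫⁻ z in Ioi T, ENNReal.ofReal (z ^ (p-1) * min 1 (a / z ^ r)) ≤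
      ENNReal.ofReal (a * (-T ^ (p - r) / (p - r))) := by
    have heq : ∫⁻ z in Ioi T, ENNReal.ofReal (a * z ^ (p-1-r)) =
        ENNReal.ofReal (a * (-T ^ (p - r) / (p - r))) := by
      have hig : IntegrableOn (fun z : ℝ => a * z ^ (p-1-r)) (Ioi T) :=
        (integrableOn_Ioi_rpow_of_lt (by linarith) hT0).const_mul a
      rw [← ofReal_integral_eq_lintegral_ofReal hig ?nn2]
      case nn2 =>
        filter_upwards [ae_restrict_mem measurableSet_Ioi] with z hz
        exact mul_nonneg ha (Real.rpow_nonneg (le_trans hT0.le (le_of_lt hz)) _)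
      rw [MeasureTheory.integral_const_mul, integral_Ioi_rpow_of_lt (by linarith) hT0]
      rw [show p - 1 - r + 1 = p - r by ring]
    rw [← heq]
    refine setLIntegral_mono (by fun_prop) ?_
    intro z hz
    apply ENNReal.ofReal_le_ofReal
    have hz0 : (0:ℝ) < z := lt_trans hT0 hz
    have hzz : z ^ (p-1-r) = z ^ (p-1) * (z ^ r)⁻¹ := by
      rw [← Real.rpow_neg hz0.le, ← Real.rpow_add hz0]
      congr 1 <;> ring
    have : z ^ (p-1) * (a / z ^ r) = a * z ^ (p-1-r) := by
      rw [hzz, div_eq_mul_inv]; ring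
    calc z ^ (p-1) * min 1 (a / z ^ r) ≤ z ^ (p-1) * (a / z ^ r) := by
          apply mul_le_mul_of_nonneg_left (min_le_right _ _) (Real.rpow_nonneg hz0.le _)
      _ = a * z ^ (p-1-r) := this
  have hpr0 : p - r < 0 := by linarith
  have hneg : ∀ x : ℝ, -x / (p - r) = x / (r - p) := by
    intro x; rw [div_eq_div_iff (by linarith) (by linarith)]; ring
  have hTnn : 0 ≤ -T ^ (p - r) / (p - r) := by
    rw [hneg]; exact div_nonneg (Real.rpow_nonneg hT0.le _) (by linarith)
  refine le_trans (add_le_add h1 h2) ?_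
  rw [← ENNReal.ofReal_add (by positivity) (mul_nonneg ha hTnn)]
  apply ENNReal.ofReal_le_ofReal
  have hu : 0 ≤ a ^ (p/r) := Real.rpow_nonneg ha _
  have he2 : (0:ℝ) < 1/p + 1/(r-p) := by
    have hx1 : (0:ℝ) < 1/p := by positivity
    have hx2 : (0:ℝ) < 1/(r-p) := one_div_pos.2 (by linarith)
    linarith
  rcases le_total a 1 with ha1 | ha1
  · have hTe : T = 1 := max_eq_left (Real.rpow_le_one ha ha1 (by positivity))
    rw [hTe, Real.one_rpow, Real.one_rpow, hneg]
    have he : (0:ℝ) < 1/(r-p) := one_div_pos.2 (by linarith)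
    nlinarith [mul_nonneg he.le (by linarith : (0:ℝ) ≤ 1 - a),
      mul_nonneg he2.le hu]
  · have ha0 : (0:ℝ) < a := lt_of_lt_of_le one_pos ha1
    have hTe : T = a ^ (1/r) := max_eq_right (by
      calc (1:ℝ) = 1 ^ (1/r) := (Real.one_rpow _).symm
        _ ≤ a ^ (1/r) := Real.rpow_le_rpow zero_le_one ha1 (by positivity))
    have h1' : T ^ p = a ^ (p/r) := by
      rw [hTe, ← Real.rpow_mul ha, show (1/r)*p = p/r by ring]
    have h2' : a * T ^ (p - r) = a ^ (p/r) := by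
      rw [hTe, ← Real.rpow_mul ha]
      nth_rewrite 1 [← Real.rpow_one a]
      rw [← Real.rpow_add ha0]
      rw [show 1 + 1/r*(p-r) = p/r by field_simp; ring]
    have h3' : a * (-T ^ (p-r) / (p-r)) = a^(p/r)/(r-p) := by
      rw [show a * (-T ^ (p-r) / (p-r)) = -(a * T^(p-r)) / (p - r) by ring, h2', hneg]
    rw [h1', h3']
    rw [show (1/p + 1/(r-p)) * (1 + a^(p/r)) =
      1/p + 1/(r-p) + a^(p/r)/p + a^(p/r)/(r-p) by ring]
    linarith [he2]

end Calc

section ZetaBound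

variable {s : ℝ → ℝ} {ν : Measure ℝ}

lemma zeta_bound_plus [IsProbabilityMeasure ν] (hs : Continuous s) (hmono : StrictMono s)
    (hs0 : s 0 = 0) {k r z : ℝ} (hk : 0 < k) (hz : 0 < z)
    (hlow : k * z ^ r ≤ s z) :
    ENNReal.ofReal (zetaPlus s ν z) ≤
      ∫⁻ w, ENNReal.ofReal (min 1 ((|s w| / k) / z ^ r)) ∂ν := by
  have hkz : 0 < k * z ^ r := by positivity
  have hsz : 0 < s z := lt_of_lt_of_le hkz hlow
  have hgm : Measurable (fun w : ℝ => min 1 (|s w| / (k * z ^ r))) :=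
    measurable_const.min (hs.measurable.abs.div_const _)
  have hgnn : ∀ w : ℝ, 0 ≤ min 1 (|s w| / (k * z ^ r)) :=
    fun w => le_min zero_le_one (by positivity)
  have hgi : Integrable (fun w : ℝ => min 1 (|s w| / (k * z ^ r))) ν := by
    rw [← integrableOn_univ]
    exact integrableOn_min_const MeasurableSet.univ (hs.measurable.abs.div_const _)
      (fun w _ => by positivity) zero_le_one
  have hreal : zetaPlus s ν z ≤ ∫ w, min 1 (|s w| / (k * z ^ r)) ∂ν := by
    refine (zetaPlus_le hs hmono hs0 hz).trans ?_
    have e1 : (∫ w in Iio (0:ℝ), min (s z) |s w| ∂ν) / s z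
        = ∫ w in Iio (0:ℝ), min 1 (|s w| / s z) ∂ν := by
      rw [← integral_div]
      apply setIntegral_congr_fun measurableSet_Iio
      intro w _
      dsimp only
      rw [← min_div_div_right hsz.le, div_self hsz.ne']
    rw [e1]
    calc ∫ w in Iio (0:ℝ), min 1 (|s w| / s z) ∂ν
        ≤ ∫ w in Iio (0:ℝ), min 1 (|s w| / (k * z ^ r)) ∂ν := by
          apply setIntegral_mono_on
            (integrableOn_min_const measurableSet_Iio (hs.measurable.abs.div_const _)
              (fun w _ => by positivity) zero_le_one)
            (hgi.integrableOn) measurableSet_Iio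
          intro w _
          exact min_le_min le_rfl
            (div_le_div_of_nonneg_left (abs_nonneg _) hkz hlow)
      _ ≤ ∫ w, min 1 (|s w| / (k * z ^ r)) ∂ν :=
          setIntegral_le_integral hgi (Filter.Eventually.of_forall hgnn)
  calc ENNReal.ofReal (zetaPlus s ν z)
      ≤ ENNReal.ofReal (∫ w, min 1 (|s w| / (k * z ^ r)) ∂ν) := ENNReal.ofReal_le_ofReal hreal
    _ = ∫⁻ w, ENNReal.ofReal (min 1 (|s w| / (k * z ^ r))) ∂ν :=
        ofReal_integral_eq_lintegral_ofReal hgi (Filter.Eventually.of_forall hgnn)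
    _ = _ := by
        congr 1 with w
        rw [div_div]

lemma zeta_bound_minus [IsProbabilityMeasure ν] (hs : Continuous s) (hmono : StrictMono s)
    (hs0 : s 0 = 0) {k r z : ℝ} (hk : 0 < k) (hz : 0 < z)
    (hlow : k * z ^ r ≤ -s (-z)) :
    ENNReal.ofReal (zetaMinus s ν z) ≤
      ∫⁻ w, ENNReal.ofReal (min 1 ((|s w| / k) / z ^ r)) ∂ν := by
  have hkz : 0 < k * z ^ r := by positivity
  have hsz : 0 < -s (-z) := lt_of_lt_of_le hkz hlow
  have hgnn : ∀ w : ℝ, 0 ≤ min 1 (|s w| / (k * z ^ r)) :=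
    fun w => le_min zero_le_one (by positivity)
  have hgi : Integrable (fun w : ℝ => min 1 (|s w| / (k * z ^ r))) ν := by
    rw [← integrableOn_univ]
    exact integrableOn_min_const MeasurableSet.univ (hs.measurable.abs.div_const _)
      (fun w _ => by positivity) zero_le_one
  have hreal : zetaMinus s ν z ≤ ∫ w, min 1 (|s w| / (k * z ^ r)) ∂ν := by
    refine (zetaMinus_le hs hmono hs0 hz).trans ?_
    have e1 : (∫ w in Ici (0:ℝ), min (-s (-z)) (s w) ∂ν) / (-s (-z))
        = ∫ w in Ici (0:ℝ), min 1 (s w / (-s (-z))) ∂ν := by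
      rw [← integral_div]
      apply setIntegral_congr_fun measurableSet_Ici
      intro w _
      dsimp only
      rw [← min_div_div_right hsz.le, div_self hsz.ne']
    rw [e1]
    calc ∫ w in Ici (0:ℝ), min 1 (s w / (-s (-z))) ∂ν
        ≤ ∫ w in Ici (0:ℝ), min 1 (|s w| / (k * z ^ r)) ∂ν := by
          apply setIntegral_mono_on
            (integrableOn_min_const measurableSet_Ici ((hs.measurable).div_const _)
              (fun w hw => div_nonneg (hs0 ▸ hmono.monotone hw) hsz.le) zero_le_one)
            (hgi.integrableOn) measurableSet_Ici
          intro w hw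
          refine min_le_min le_rfl ?_
          calc s w / (-s (-z)) ≤ s w / (k * z ^ r) :=
                div_le_div_of_nonneg_left (hs0 ▸ hmono.monotone hw) hkz hlow
            _ ≤ |s w| / (k * z ^ r) :=
                (div_le_div_iff_of_pos_right hkz).2 (le_abs_self _)
      _ ≤ ∫ w, min 1 (|s w| / (k * z ^ r)) ∂ν :=
          setIntegral_le_integral hgi (Filter.Eventually.of_forall hgnn)
  calc ENNReal.ofReal (zetaMinus s ν z)
      ≤ ENNReal.ofReal (∫ w, min 1 (|s w| / (k * z ^ r)) ∂ν) := ENNReal.ofReal_le_ofReal hreal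
    _ = ∫⁻ w, ENNReal.ofReal (min 1 (|s w| / (k * z ^ r))) ∂ν :=
        ofReal_integral_eq_lintegral_ofReal hgi (Filter.Eventually.of_forall hgnn)
    _ = _ := by
        congr 1 with w
        rw [div_div]

end ZetaBound

section Main

variable {s : ℝ → ℝ} {ν : Measure ℝ}

lemma pow_bound (hmono : Monotone s) (hs0 : s 0 = 0) {p q r k K : ℝ} (hp : 0 < p)
    (hk : 0 < k) (hK : 0 < K) (hrq : r ≤ q) (hpr : p < r)
    (hb : ∀ y : ℝ, 1 ≤ |y| → |s y| ≤ K * |y| ^ q) (w : ℝ) :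
    (|s w| / k) ^ (p/r) ≤ (max (s 1) (-s (-1)) / k) ^ (p/r)
      + (K/k) ^ (p/r) * |w| ^ (p + q - r) := by
  have hr0 : 0 < r := hp.trans hpr
  have hpq : 0 ≤ p/r := by positivity
  rcases le_total |w| 1 with hw | hw
  · have h1 : |s w| ≤ max (s 1) (-s (-1)) := by
      rcases abs_le.1 hw with ⟨h2, h3⟩
      rw [abs_le]
      refine ⟨?_, le_trans (hmono h3) (le_max_left _ _)⟩
      calc -(max (s 1) (-s (-1))) ≤ -(-s (-1)) := neg_le_neg (le_max_right _ _)
        _ = s (-1) := neg_neg _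
        _ ≤ s w := hmono h2
    have hdiv : |s w| / k ≤ max (s 1) (-s (-1)) / k := by gcongr
    have hle := Real.rpow_le_rpow (by positivity) hdiv hpq
    nlinarith [Real.rpow_nonneg (abs_nonneg w) (p+q-r),
      Real.rpow_nonneg (div_nonneg hK.le hk.le) (p/r),
      mul_nonneg (Real.rpow_nonneg (div_nonneg hK.le hk.le) (p/r))
        (Real.rpow_nonneg (abs_nonneg w) (p+q-r))]
  · have h1 : |s w| ≤ K * |w| ^ q := hb w hw
    have e1 : |s w| / k ≤ (K/k) * |w| ^ q := by
      rw [div_mul_eq_mul_div]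
      gcongr
    calc (|s w|/k) ^ (p/r) ≤ ((K/k) * |w| ^ q) ^ (p/r) :=
          Real.rpow_le_rpow (by positivity) e1 hpq
      _ = (K/k) ^ (p/r) * (|w| ^ q) ^ (p/r) :=
          Real.mul_rpow (by positivity) (Real.rpow_nonneg (abs_nonneg _) _)
      _ = (K/k) ^ (p/r) * |w| ^ (q * (p/r)) := by
          rw [← Real.rpow_mul (abs_nonneg w)]
      _ ≤ (K/k) ^ (p/r) * |w| ^ (p + q - r) := by
          apply mul_le_mul_of_nonneg_left ?_ (Real.rpow_nonneg (div_nonneg hK.le hk.le) _)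
          apply Real.rpow_le_rpow_of_exponent_le hw
          rw [mul_div_assoc']
          rw [div_le_iff₀ hr0]
          nlinarith [mul_nonneg (by linarith : (0:ℝ) ≤ q - r) (by linarith : (0:ℝ) ≤ r - p)]
      _ ≤ _ := le_add_of_nonneg_left
          (Real.rpow_nonneg (div_nonneg (le_max_of_le_left (hs0 ▸ hmono zero_le_one)) hk.le) _)

lemma small_term_lt_top {p : ℝ} (hp : 0 < p) :
    ∫⁻ z in Ioc (0:ℝ) 1, ENNReal.ofReal (z ^ (p-1) * 4) < ⊤ := by
  have hint : IntegrableOn (fun z : ℝ => z ^ (p-1) * 4) (Ioc 0 1) := by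
    have := intervalIntegral.intervalIntegrable_rpow' (a := 0) (b := 1)
      (by linarith : (-1:ℝ) < p-1)
    rw [intervalIntegrable_iff_integrableOn_Ioc_of_le zero_le_one] at this
    exact this.mul_const 4
  rw [← ofReal_integral_eq_lintegral_ofReal hint ?_]
  · exact ENNReal.ofReal_lt_top
  · filter_upwards [ae_restrict_mem measurableSet_Ioc] with z hz
    have h0 : (0:ℝ) < z := hz.1
    positivity

lemma tail_term_lt_top [IsProbabilityMeasure ν] {p m : ℝ} (hp : 0 < p) (hpm : p ≤ m)
    (hM : ∫⁻ y, ENNReal.ofReal (|y| ^ m) ∂ν < ⊤) :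
    ∫⁻ z in Ioi (0:ℝ), ENNReal.ofReal (z ^ (p-1)) * (ν (Ici z) + ν (Iic (-z))) < ⊤ := by
  have hLp : ∫⁻ y, ENNReal.ofReal (|y| ^ p) ∂ν < ⊤ := by
    calc ∫⁻ y, ENNReal.ofReal (|y| ^ p) ∂ν
        ≤ ∫⁻ y, (1 + ENNReal.ofReal (|y| ^ m)) ∂ν := by
          apply lintegral_mono
          intro y
          rcases le_total |y| 1 with hy | hy
          · refine le_trans ?_ le_self_add
            exact ENNReal.ofReal_le_one.2 (Real.rpow_le_one (abs_nonneg _) hy hp.le)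
          · refine le_trans ?_ le_add_self
            exact ENNReal.ofReal_le_ofReal (Real.rpow_le_rpow_of_exponent_le hy hpm)
      _ = ν univ + ∫⁻ y, ENNReal.ofReal (|y|^m) ∂ν := by
          rw [lintegral_add_left measurable_const, lintegral_one]
      _ < ⊤ := ENNReal.add_lt_top.2 ⟨measure_lt_top _ _, hM⟩
  have layer := lintegral_rpow_eq_lintegral_meas_le_mul ν (f := fun y => |y|)
      (Filter.Eventually.of_forall (fun y => abs_nonneg y)) measurable_abs.aemeasurable hp
  rw [layer] at hLp
  have hX : ∫⁻ t in Ioi (0:ℝ), ν {a | t ≤ |a|} * ENNReal.ofReal (t ^ (p-1)) < ⊤ := by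
    rcases ENNReal.mul_lt_top_iff.1 hLp with ⟨_, h⟩ | h | h
    · exact h
    · rw [ENNReal.ofReal_eq_zero] at h; linarith
    · simp [h]
  calc ∫⁻ z in Ioi (0:ℝ), ENNReal.ofReal (z^(p-1)) * (ν (Ici z) + ν (Iic (-z)))
      ≤ ∫⁻ z in Ioi (0:ℝ), 2 * (ν {a | z ≤ |a|} * ENNReal.ofReal (z ^ (p-1))) := by
        apply lintegral_mono
        intro z
        have h1 : ν (Ici z) ≤ ν {a | z ≤ |a|} :=
          measure_mono (fun a ha => le_trans ha (le_abs_self a))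
        have h2 : ν (Iic (-z)) ≤ ν {a | z ≤ |a|} := measure_mono (fun a ha => by
          simp only [mem_setOf_eq]
          rw [le_abs]
          right
          linarith [mem_Iic.1 ha])
        calc ENNReal.ofReal (z^(p-1)) * (ν (Ici z) + ν (Iic (-z)))
            ≤ ENNReal.ofReal (z^(p-1)) * (2 * ν {a | z ≤ |a|}) := by
              apply mul_le_mul_right
              rw [two_mul]
              exact add_le_add h1 h2
          _ = 2 * (ν {a | z ≤ |a|} * ENNReal.ofReal (z^(p-1))) := by ring
    _ = 2 * ∫⁻ t in Ioi (0:ℝ), ν {a | t ≤ |a|} * ENNReal.ofReal (t ^ (p-1)) :=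
        lintegral_const_mul' 2 _ (by simp)
    _ < ⊤ := ENNReal.mul_lt_top (by simp) hX

lemma zeta_term_lt_top [IsProbabilityMeasure ν] (hs : Continuous s) (hmono : Monotone s)
    (hs0 : s 0 = 0) {p q r k K : ℝ} (hp : 0 < p) (hk : 0 < k) (hK : 0 < K) (hrq : r ≤ q) (hpr : p < r)
    (hb : ∀ y : ℝ, 1 ≤ |y| → |s y| ≤ K * |y| ^ q)
    (hM : ∫⁻ y, ENNReal.ofReal (|y| ^ (p + q - r)) ∂ν < ⊤) :
    ∫⁻ z in Ioi (1:ℝ), (ENNReal.ofReal (z ^ (p-1)) *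
      ∫⁻ w, ENNReal.ofReal (min 1 ((|s w| / k) / z ^ r)) ∂ν) < ⊤ := by
  have hr0 : 0 < r := hp.trans hpr
  have hsm : Measurable s := hs.measurable
  set F : ℝ → ℝ → ℝ≥0∞ := fun z w => ENNReal.ofReal (z ^ (p-1) * min 1 ((|s w| / k) / z ^ r))
    with hF
  have hFm : Measurable (Function.uncurry F) := by
    apply Measurable.ennreal_ofReal
    fun_prop
  have step1 : ∫⁻ z in Ioi (1:ℝ), (ENNReal.ofReal (z ^ (p-1)) *
      ∫⁻ w, ENNReal.ofReal (min 1 ((|s w| / k) / z ^ r)) ∂ν)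
      = ∫⁻ z in Ioi (1:ℝ), ∫⁻ w, F z w ∂ν := by
    apply setLIntegral_congr_fun measurableSet_Ioi
    intro z hz
    beta_reduce
    rw [← lintegral_const_mul' _ _ ENNReal.ofReal_ne_top]
    congr 1 with w
    rw [← ENNReal.ofReal_mul (Real.rpow_nonneg (le_trans zero_le_one hz.le) _)]
  rw [step1, lintegral_lintegral_swap hFm.aemeasurable]
  set C : ℝ := 1/p + 1/(r-p) with hC
  have hC0 : 0 < C := by
    rw [hC]
    have hx1 : (0:ℝ) < 1/p := by positivity
    have hx2 : (0:ℝ) < 1/(r-p) := one_div_pos.2 (by linarith)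
    linarith
  set D : ℝ := C * (1 + (max (s 1) (-s (-1)) / k) ^ (p/r)) with hD
  set E : ℝ := C * ((K/k) ^ (p/r)) with hE
  calc ∫⁻ w, (∫⁻ z in Ioi (1:ℝ), F z w) ∂ν
      ≤ ∫⁻ w, (ENNReal.ofReal D + ENNReal.ofReal E * ENNReal.ofReal (|w| ^ (p+q-r))) ∂ν := by
        apply lintegral_mono
        intro w
        calc ∫⁻ z in Ioi (1:ℝ), F z w
            ≤ ENNReal.ofReal (C * (1 + (|s w|/k) ^ (p/r))) := calc_aux hp hpr (by positivity)
          _ ≤ ENNReal.ofReal (D + E * |w| ^ (p+q-r)) := by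
              apply ENNReal.ofReal_le_ofReal
              have := pow_bound hmono hs0 hp hk hK hrq hpr hb w
              have h2 : C * (1 + (|s w|/k) ^ (p/r)) ≤
                  C * (1 + ((max (s 1) (-s (-1)) / k) ^ (p/r) + (K/k)^(p/r) * |w|^(p+q-r))) :=
                mul_le_mul_of_nonneg_left (by linarith) hC0.le
              rw [hD, hE]
              nlinarith [h2]
          _ ≤ ENNReal.ofReal D + ENNReal.ofReal (E * |w| ^ (p+q-r)) := ENNReal.ofReal_add_le
          _ = ENNReal.ofReal D + ENNReal.ofReal E * ENNReal.ofReal (|w| ^ (p+q-r)) := by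
              congr 1
              rw [ENNReal.ofReal_mul
                (mul_nonneg hC0.le (Real.rpow_nonneg (div_nonneg hK.le hk.le) _))]
    _ = ENNReal.ofReal D * ν univ + ENNReal.ofReal E * ∫⁻ y, ENNReal.ofReal (|y| ^ (p+q-r)) ∂ν := by
        rw [lintegral_add_left measurable_const, lintegral_const,
          lintegral_const_mul' _ _ ENNReal.ofReal_ne_top]
    _ < ⊤ := ENNReal.add_lt_top.2 ⟨ENNReal.mul_lt_top ENNReal.ofReal_lt_top (measure_lt_top _ _),
        ENNReal.mul_lt_top ENNReal.ofReal_lt_top hM⟩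

end Main


end Helpers

set_option maxHeartbeats 1000000 in
/-- Theorem 4(ii) of the paper: case `p < r` under the polynomial growth
bounds `k|y|^r ≤ |s(y)| ≤ K|y|^q` for `|y| ≥ 1`. -/
theorem Hp_embedding_polynomial_scale_p_lt_r
    (s : ℝ → ℝ) (hs : Continuous s) (hmono : StrictMono s) (hs0 : s 0 = 0)
    (ν : Measure ℝ) [IsProbabilityMeasure ν] (hν0 : ν {0} = 0)
    (p q r k K : ℝ) (hp : 0 < p) (hk : 0 < k) (hK : 0 < K)
    (hr : 0 ≤ r) (hrq : r ≤ q) (hpr : p < r)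
    (hbound : ∀ y : ℝ, 1 ≤ |y| → k * |y| ^ r ≤ |s y| ∧ |s y| ≤ K * |y| ^ q) :
    ((∫⁻ y, ENNReal.ofReal (|y| ^ (p + q - r)) ∂ν < ⊤) →
      ∫⁻ z in Ioi (0 : ℝ), ENNReal.ofReal
        (z ^ (p - 1) * (nuPlus s ν z + nuMinus s ν z)) < ⊤) ∧
    ((∫⁻ z in Ioi (0 : ℝ), ENNReal.ofReal
        (z ^ (p - 1) * (nuPlus s ν z + nuMinus s ν z)) < ⊤) →
      ∫⁻ y, ENNReal.ofReal (|y| ^ p) ∂ν < ⊤) := by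
  have hr0 : 0 < r := hp.trans hpr
  have hm : p ≤ p + q - r := by linarith
  have hlow : ∀ x : ℝ, 1 ≤ x → k * x ^ r ≤ s x ∧ k * x ^ r ≤ -s (-x) := by
    intro x hx
    have hx0 : (0:ℝ) < x := by linarith
    have hax : |x| = x := abs_of_pos hx0
    have h1 := (hbound x (by rwa [hax])).1
    have h2 := (hbound (-x) (by rwa [abs_neg, hax])).1
    have hsx : 0 < s x := hs0 ▸ hmono hx0
    have hsnx : s (-x) < 0 := hs0 ▸ hmono (by linarith : -x < (0:ℝ))
    rw [hax, abs_of_pos hsx] at h1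
    rw [abs_neg, hax, abs_of_neg hsnx] at h2
    exact ⟨h1, h2⟩
  have htop : Tendsto s atTop atTop := by
    apply tendsto_atTop_mono' _ _ ((tendsto_rpow_atTop hr0).const_mul_atTop hk)
    filter_upwards [eventually_ge_atTop (1:ℝ)] with x hx
    exact (hlow x hx).1
  have hbot : Tendsto (fun x : ℝ => s (-x)) atTop atBot := by
    apply tendsto_atBot_mono' _ _
      (tendsto_neg_atTop_atBot.comp ((tendsto_rpow_atTop hr0).const_mul_atTop hk))
    filter_upwards [eventually_ge_atTop (1:ℝ)] with x hx
    have := (hlow x hx).2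
    simp only [Function.comp_apply]
    linarith
  constructor
  · -- moment condition implies integral finite
    intro hM
    rw [show Ioi (0:ℝ) = Ioc 0 1 ∪ Ioi 1 from (Ioc_union_Ioi_eq_Ioi zero_le_one).symm,
      lintegral_union measurableSet_Ioi Ioc_disjoint_Ioi_same, ENNReal.add_lt_top]
    constructor
    · -- small z piece
      refine lt_of_le_of_lt (setLIntegral_mono (by fun_prop) ?_) (small_term_lt_top hp)
      intro z hz
      apply ENNReal.ofReal_le_ofReal
      apply mul_le_mul_of_nonneg_left ?_ (Real.rpow_nonneg hz.1.le _)
      have t1 : (ν (Ici z)).toReal ≤ 1 := by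
        apply ENNReal.toReal_le_of_le_ofReal zero_le_one
        simpa using prob_le_one (μ := ν) (s := Ici z)
      have t2 : (ν (Iic (-z))).toReal ≤ 1 := by
        apply ENNReal.toReal_le_of_le_ofReal zero_le_one
        simpa using prob_le_one (μ := ν) (s := Iic (-z))
      have t3 := zetaPlus_le_one (ν := ν) hs hmono hs0 hz.1
      have t4 := zetaMinus_le_one (ν := ν) hs hmono hs0 hz.1
      unfold nuPlus nuMinus
      linarith
    · -- large z piece
      set J : ℝ → ℝ≥0∞ := fun z => ∫⁻ w, ENNReal.ofReal (min 1 ((|s w| / k) / z ^ r)) ∂ν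
        with hJ
      have hsm : Measurable s := hs.measurable
      have hJm : Measurable J := by
        rw [hJ]
        exact Measurable.lintegral_prod_right'
          (f := fun zw : ℝ × ℝ => ENNReal.ofReal (min 1 ((|s zw.2| / k) / zw.1 ^ r)))
          (Measurable.ennreal_ofReal (by fun_prop))
      have htail1 : Measurable (fun z : ℝ => ν (Ici z)) :=
        Antitone.measurable (fun a b hab => measure_mono (Ici_subset_Ici.2 hab))
      have htail2 : Measurable (fun z : ℝ => ν (Iic (-z))) :=
        Antitone.measurable (fun a b hab => measure_mono (Iic_subset_Iic.2 (by linarith)))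
      have hmeas : Measurable (fun z : ℝ =>
          ENNReal.ofReal (z^(p-1)) * ((ν (Ici z) + ν (Iic (-z))) + 2 * J z)) := by
        apply Measurable.mul (by fun_prop)
        exact ((htail1.add htail2).add (measurable_const.mul hJm))
      refine lt_of_le_of_lt (setLIntegral_mono hmeas ?_) ?_
      · intro z hz
        have hz0 : (0:ℝ) < z := lt_trans one_pos hz
        rw [ENNReal.ofReal_mul (Real.rpow_nonneg hz0.le _)]
        apply mul_le_mul_right
        have b1 := zeta_bound_plus (ν := ν) hs hmono hs0 hk hz0 ((hlow z hz.le).1)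
        have b2 := zeta_bound_minus (ν := ν) hs hmono hs0 hk hz0 ((hlow z hz.le).2)
        calc ENNReal.ofReal (nuPlus s ν z + nuMinus s ν z)
            ≤ ENNReal.ofReal (nuPlus s ν z) + ENNReal.ofReal (nuMinus s ν z) :=
              ENNReal.ofReal_add_le
          _ ≤ (ENNReal.ofReal (zetaPlus s ν z) + ENNReal.ofReal ((ν (Ici z)).toReal))
              + (ENNReal.ofReal ((ν (Iic (-z))).toReal) + ENNReal.ofReal (zetaMinus s ν z)) := by
              unfold nuPlus nuMinus
              exact add_le_add ENNReal.ofReal_add_le ENNReal.ofReal_add_le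
          _ = (ENNReal.ofReal (zetaPlus s ν z) + ν (Ici z))
              + (ν (Iic (-z)) + ENNReal.ofReal (zetaMinus s ν z)) := by
              rw [ENNReal.ofReal_toReal (measure_ne_top ν _),
                ENNReal.ofReal_toReal (measure_ne_top ν _)]
          _ ≤ (J z + ν (Ici z)) + (ν (Iic (-z)) + J z) := by
              exact add_le_add (add_le_add b1 le_rfl) (add_le_add le_rfl b2)
          _ = (ν (Ici z) + ν (Iic (-z))) + 2 * J z := by ring
      · have hsplit : (fun z : ℝ => ENNReal.ofReal (z^(p-1)) *
            ((ν (Ici z) + ν (Iic (-z))) + 2 * J z))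
            = fun z : ℝ => ENNReal.ofReal (z^(p-1)) * (ν (Ici z) + ν (Iic (-z)))
              + 2 * (ENNReal.ofReal (z^(p-1)) * J z) := by
          funext z
          ring
        rw [hsplit, lintegral_add_left
          (f := fun z : ℝ => ENNReal.ofReal (z^(p-1)) * (ν (Ici z) + ν (Iic (-z))))
          ((by fun_prop : Measurable fun z : ℝ => ENNReal.ofReal (z^(p-1))).mul
            (htail1.add htail2)), ENNReal.add_lt_top]
        constructor
        · exact lt_of_le_of_lt (lintegral_mono_set (Ioi_subset_Ioi zero_le_one))
            (tail_term_lt_top hp hm hM)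
        · rw [lintegral_const_mul' 2 _ (by simp)]
          exact ENNReal.mul_lt_top (by simp)
            (zeta_term_lt_top hs hmono.monotone hs0 hp hk hK hrq hpr
              (fun y hy => (hbound y hy).2) hM)
  · -- integral finite implies p-th moment finite
    intro hI
    have layer := lintegral_rpow_eq_lintegral_meas_le_mul ν (f := fun y => |y|)
      (Filter.Eventually.of_forall (fun y => abs_nonneg y)) measurable_abs.aemeasurable hp
    rw [layer]
    apply ENNReal.mul_lt_top ENNReal.ofReal_lt_top
    refine lt_of_le_of_lt (lintegral_mono_ae ?_) hI
    rw [ae_restrict_iff' measurableSet_Ioi]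
    apply Filter.Eventually.of_forall
    intro z hz
    have hz0 : (0:ℝ) < z := hz
    have hsets : {a : ℝ | z ≤ |a|} = Ici z ∪ Iic (-z) := by
      ext a
      simp only [mem_setOf_eq, mem_union, mem_Ici, mem_Iic, le_abs]
      constructor
      · rintro (h | h)
        exacts [Or.inl h, Or.inr (by linarith)]
      · rintro (h | h)
        exacts [Or.inl h, Or.inr (by linarith)]
    calc ν {a | z ≤ |a|} * ENNReal.ofReal (z ^ (p-1))
        ≤ (ν (Ici z) + ν (Iic (-z))) * ENNReal.ofReal (z ^ (p-1)) :=
          mul_le_mul_left (hsets ▸ measure_union_le _ _) _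
      _ ≤ ENNReal.ofReal (z ^ (p-1) * (nuPlus s ν z + nuMinus s ν z)) := by
          rw [ENNReal.ofReal_mul (Real.rpow_nonneg hz0.le _), mul_comm]
          apply mul_le_mul_right
          have hrepr : ν (Ici z) + ν (Iic (-z))
              = ENNReal.ofReal ((ν (Ici z)).toReal + (ν (Iic (-z))).toReal) := by
            rw [ENNReal.ofReal_add ENNReal.toReal_nonneg ENNReal.toReal_nonneg,
              ENNReal.ofReal_toReal (measure_ne_top ν _),
              ENNReal.ofReal_toReal (measure_ne_top ν _)]
          rw [hrepr]
          apply ENNReal.ofReal_le_ofReal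
          have h3 := zetaPlus_nonneg (ν := ν) hmono hs0 hbot hz0
          have h4 := zetaMinus_nonneg (ν := ν) hmono hs0 htop hz0
          unfold nuPlus nuMinus
          linarith
end

section
/- Let p > 0 and suppose in addition that s is bounded, i.e. sup_{y∈ℝ} s(y) = α < ∞ and inf_{y∈ℝ} s(y) = β > -∞, and that ∫_ℝ s(y) ν(dy) = 0. Then ∫_0^∞ z^{p-1}(ν₊(z)+ν₋(z)) dz < ∞ if and only if ∫_ℝ |y|^p ν(dy) < ∞. (This is the analytic content of the paper's Theorem for diffusions whose natural-scale state space is a finite interval: ν₊ and ν₋ are the tail distribution functions of the supremum and of the negative of the infimum of the diffusion stopped by the optimal embedding, so the conclusion says the embedding is an H^p-embedding exactly when ν has a finite p-th moment.) -/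
open MeasureTheory Set Filter
open scoped ENNReal NNReal Classical
open scoped Topology

/-- Theorem 5 of the paper, analytic content: if the scale function `s`
is bounded above and below and `∫ s dν = 0`, then
`∫_0^∞ z^{p-1}(ν₊(z)+ν₋(z)) dz < ∞` if and only if `ν` has a finite `p`-th moment. -/
theorem Hp_embedding_bounded_scale
    (s : ℝ → ℝ) (hs : Continuous s) (hmono : StrictMono s) (hs0 : s 0 = 0)
    (ν : Measure ℝ) [IsProbabilityMeasure ν] (hν0 : ν {0} = 0)
    (p : ℝ) (hp : 0 < p)
    (hbddA : BddAbove (Set.range s)) (hbddB : BddBelow (Set.range s))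
    (hmean : ∫ y, s y ∂ν = 0) :
    (∫⁻ z in Ioi (0 : ℝ), ENNReal.ofReal
        (z ^ (p - 1) * (nuPlus s ν z + nuMinus s ν z)) < ⊤) ↔
      ∫⁻ y, ENNReal.ofReal (|y| ^ p) ∂ν < ⊤ := by
  classical
  have hsm : Measurable s := hs.measurable
  obtain ⟨a, ha⟩ := hbddA
  obtain ⟨b, hb⟩ := hbddB
  set M : ℝ := max a (-b) with hMdef
  have hM : ∀ w, |s w| ≤ M := by
    intro w
    rw [abs_le]
    constructor
    · have h1 : b ≤ s w := hb ⟨w, rfl⟩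
      have h2 : -b ≤ M := le_max_right _ _
      linarith
    · exact le_trans (ha ⟨w, rfl⟩) (le_max_left _ _)
  have hs1 : 0 < s 1 := by rw [← hs0]; exact hmono one_pos
  have hsneg1 : s (-1) < 0 := by rw [← hs0]; exact hmono (by norm_num)
  have hMpos : 0 < M := lt_of_lt_of_le hs1 (le_trans (le_abs_self _) (hM 1))
  have hs_nonneg : ∀ w : ℝ, 0 ≤ w → 0 ≤ s w := by
    intro w hw; rw [← hs0]; exact hmono.monotone hw
  have hs_neg : ∀ w : ℝ, w < 0 → s w < 0 := by
    intro w hw; rw [← hs0]; exact hmono hw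
  have hprob : ∀ t : Set ℝ, (ν t).toReal ≤ 1 := by
    intro t
    have := ENNReal.toReal_mono ENNReal.one_ne_top (prob_le_one (μ := ν) (s := t))
    simpa using this
  -- integrability helpers
  have int_s_glob : Integrable s ν :=
    (integrable_const M).mono' hsm.aestronglyMeasurable (ae_of_all _ hM)
  have key_int : ∀ f : ℝ → ℝ, Measurable f → (∀ w, |f w| ≤ M) →
      ∀ t : Set ℝ, IntegrableOn f t ν := by
    intro f hf hbf t
    exact ((integrable_const M).mono' hf.aestronglyMeasurable (ae_of_all _ hbf)).integrableOn
  have min_bound : ∀ c : ℝ, |c| ≤ M → ∀ w, |min c (s w)| ≤ M := by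
    intro c hc w
    rcases min_cases c (s w) with ⟨h, _⟩ | ⟨h, _⟩ <;> rw [h]
    exacts [hc, hM w]
  have int_min : ∀ c : ℝ, |c| ≤ M → ∀ t : Set ℝ,
      IntegrableOn (fun w => min c (s w)) t ν :=
    fun c hc t => key_int _ (measurable_const.min hsm) (min_bound c hc) t
  have min_bound' : ∀ c : ℝ, |c| ≤ M → ∀ w, abs (min c |s w|) ≤ M := by
    intro c hc w
    rcases min_cases c |s w| with ⟨h, _⟩ | ⟨h, _⟩ <;> rw [h]
    exacts [hc, by rw [abs_abs]; exact hM w]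
  have int_min' : ∀ c : ℝ, |c| ≤ M → ∀ t : Set ℝ,
      IntegrableOn (fun w => min c |s w|) t ν :=
    fun c hc t => key_int _ (measurable_const.min hsm.abs) (min_bound' c hc) t
  have int_s : ∀ t : Set ℝ, IntegrableOn s t ν := key_int s hsm hM
  have int_abs : ∀ t : Set ℝ, IntegrableOn (fun w => |s w|) t ν :=
    key_int _ hsm.abs (fun w => by rw [abs_abs]; exact hM w)
  -- the common value m
  set m : ℝ := ∫ w in Ici (0 : ℝ), s w ∂ν with hmdef
  have hsplit : ∫ w in Iio (0 : ℝ), s w ∂ν + m = 0 := by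
    have h := integral_add_compl (measurableSet_Iio : MeasurableSet (Iio (0 : ℝ))) int_s_glob
    rw [compl_Iio, hmean] at h
    exact h
  have hm' : ∫ w in Iio (0 : ℝ), |s w| ∂ν = m := by
    have h1 : ∫ w in Iio (0 : ℝ), |s w| ∂ν = ∫ w in Iio (0 : ℝ), -s w ∂ν :=
      setIntegral_congr_fun measurableSet_Iio (fun w hw => abs_of_neg (hs_neg w hw))
    rw [h1, integral_neg]
    linarith
  -- basic facts about cY
  have cYpos : ∀ z : ℝ, 0 ≤ z → cY s ν z = ∫ w in Ici (0 : ℝ), min (s z) (s w) ∂ν := by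
    intro z hz; simp only [cY, if_pos hz]
  have cYneg : ∀ y : ℝ, y < 0 → cY s ν y = ∫ w in Iio (0 : ℝ), min |s y| |s w| ∂ν := by
    intro y hy; simp only [cY, if_neg (not_le.2 hy)]
  have cY_nonneg : ∀ y : ℝ, 0 ≤ cY s ν y := by
    intro y
    rcases le_or_gt 0 y with hy | hy
    · rw [cYpos y hy]
      exact setIntegral_nonneg measurableSet_Ici
        (fun w hw => le_min (hs_nonneg y hy) (hs_nonneg w hw))
    · rw [cYneg y hy]
      exact setIntegral_nonneg measurableSet_Iio
        (fun w _ => le_min (abs_nonneg _) (abs_nonneg _))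
  have cY_le_m : ∀ y : ℝ, cY s ν y ≤ m := by
    intro y
    rcases le_or_gt 0 y with hy | hy
    · rw [cYpos y hy, hmdef]
      exact setIntegral_mono_on (int_min _ (hM y) _) (int_s _) measurableSet_Ici
        (fun w _ => min_le_right _ _)
    · rw [cYneg y hy, ← hm']
      exact setIntegral_mono_on (int_min' _ (by rw [abs_abs]; exact hM y) _) (int_abs _)
        measurableSet_Iio (fun w _ => min_le_right _ _)
  have cY_neg_le : ∀ y : ℝ, y < 0 → cY s ν y ≤ -s y := by
    intro y hy
    rw [cYneg y hy]
    have h1 : ∫ w in Iio (0 : ℝ), min |s y| |s w| ∂ν ≤ ∫ _w in Iio (0 : ℝ), |s y| ∂ν :=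
      setIntegral_mono_on (int_min' _ (by rw [abs_abs]; exact hM y) _)
        integrableOn_const measurableSet_Iio
        (fun w _ => min_le_left _ _)
    have h2 : ∫ _w in Iio (0 : ℝ), |s y| ∂ν = (ν (Iio 0)).toReal * |s y| := by
      rw [setIntegral_const]; simp [smul_eq_mul, Measure.real]
    have h3 : (ν (Iio 0)).toReal * |s y| ≤ 1 * |s y| :=
      mul_le_mul_of_nonneg_right (hprob _) (abs_nonneg _)
    have h4 : |s y| = -s y := abs_of_neg (hs_neg y hy)
    calc ∫ w in Iio (0 : ℝ), min |s y| |s w| ∂ν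
        ≤ (ν (Iio 0)).toReal * |s y| := h2 ▸ h1
      _ ≤ 1 * |s y| := h3
      _ = -s y := by rw [one_mul, h4]
  have cY_le_s : ∀ y : ℝ, 0 ≤ y → cY s ν y ≤ s y := by
    intro y hy
    rw [cYpos y hy]
    have h1 : ∫ w in Ici (0 : ℝ), min (s y) (s w) ∂ν ≤ ∫ _w in Ici (0 : ℝ), s y ∂ν :=
      setIntegral_mono_on (int_min _ (hM y) _)
        integrableOn_const measurableSet_Ici
        (fun w _ => min_le_left _ _)
    have h2 : ∫ _w in Ici (0 : ℝ), s y ∂ν = (ν (Ici 0)).toReal * s y := by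
      rw [setIntegral_const]; simp [smul_eq_mul, Measure.real]
    have h3 : (ν (Ici 0)).toReal * s y ≤ 1 * s y :=
      mul_le_mul_of_nonneg_right (hprob _) (hs_nonneg y hy)
    calc ∫ w in Ici (0 : ℝ), min (s y) (s w) ∂ν ≤ (ν (Ici 0)).toReal * s y := h2 ▸ h1
      _ ≤ 1 * s y := h3
      _ = s y := one_mul _
  -- tail bounds
  have tailA : ∀ z : ℝ, 0 < z → m - cY s ν z ≤ M * (ν (Ici z)).toReal := by
    intro z hz
    rw [cYpos z hz.le, hmdef, ← integral_sub (int_s _) (int_min _ (hM z) _)]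
    have hle : ∫ w in Ici (0 : ℝ), (s w - min (s z) (s w)) ∂ν ≤
        ∫ w in Ici (0 : ℝ), (Ici z).indicator (fun _ => M) w ∂ν := by
      refine setIntegral_mono_on ((int_s _).sub (int_min _ (hM z) _))
        (((integrable_const M).indicator measurableSet_Ici).integrableOn)
        measurableSet_Ici ?_
      intro w hw
      rcases le_or_gt z w with hzw | hzw
      · rw [indicator_of_mem (mem_Ici.2 hzw)]
        have h0 : 0 ≤ min (s z) (s w) := le_min (hs_nonneg _ hz.le) (hs_nonneg _ hw)
        have h1 : s w ≤ M := le_trans (le_abs_self _) (hM w)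
        linarith
      · rw [indicator_of_notMem (by simpa using hzw.not_ge : w ∉ Ici z)]
        have h1 : s w ≤ s z := hmono.monotone hzw.le
        simp [min_eq_right h1]
    have heval : ∫ w in Ici (0 : ℝ), (Ici z).indicator (fun _ => M) w ∂ν =
        (ν (Ici (0 : ℝ) ∩ Ici z)).toReal * M := by
      rw [setIntegral_indicator measurableSet_Ici, setIntegral_const, smul_eq_mul]; rfl
    have hmeas : (ν (Ici (0 : ℝ) ∩ Ici z)).toReal ≤ (ν (Ici z)).toReal :=
      ENNReal.toReal_mono (measure_ne_top ν _) (measure_mono inter_subset_right)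
    calc ∫ w in Ici (0 : ℝ), (s w - min (s z) (s w)) ∂ν
        ≤ (ν (Ici (0 : ℝ) ∩ Ici z)).toReal * M := heval ▸ hle
      _ ≤ (ν (Ici z)).toReal * M :=
          mul_le_mul_of_nonneg_right hmeas hMpos.le
      _ = M * (ν (Ici z)).toReal := mul_comm _ _
  have tailB : ∀ y : ℝ, 0 < y → m - cY s ν (-y) ≤ M * (ν (Iic (-y))).toReal := by
    intro y hy
    have hny : (-y : ℝ) < 0 := by linarith
    rw [cYneg _ hny, ← hm', ← integral_sub (int_abs _) (int_min' _ (by rw [abs_abs]; exact hM _) _)]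
    have hle : ∫ w in Iio (0 : ℝ), (|s w| - min |s (-y)| |s w|) ∂ν ≤
        ∫ w in Iio (0 : ℝ), (Iic (-y)).indicator (fun _ => M) w ∂ν := by
      refine setIntegral_mono_on ((int_abs _).sub (int_min' _ (by rw [abs_abs]; exact hM _) _))
        (((integrable_const M).indicator measurableSet_Iic).integrableOn)
        measurableSet_Iio ?_
      intro w hw
      rcases le_or_gt w (-y) with hwy | hwy
      · rw [indicator_of_mem (mem_Iic.2 hwy)]
        have h0 : 0 ≤ min |s (-y)| |s w| := le_min (abs_nonneg _) (abs_nonneg _)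
        have h1 : |s w| ≤ M := hM w
        linarith
      · rw [indicator_of_notMem (by simpa using hwy.not_ge : w ∉ Iic (-y))]
        have h1 : |s w| ≤ |s (-y)| := by
          have h2 : s (-y) < s w := hmono hwy
          have h3 : s w < 0 := hs_neg w hw
          have h4 : s (-y) < 0 := hs_neg _ hny
          rw [abs_of_neg h3, abs_of_neg h4]; linarith
        simp [min_eq_right h1]
    have heval : ∫ w in Iio (0 : ℝ), (Iic (-y)).indicator (fun _ => M) w ∂ν =
        (ν (Iio (0 : ℝ) ∩ Iic (-y))).toReal * M := by
      rw [setIntegral_indicator measurableSet_Iic, setIntegral_const, smul_eq_mul]; rfl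
    have hmeas : (ν (Iio (0 : ℝ) ∩ Iic (-y))).toReal ≤ (ν (Iic (-y))).toReal :=
      ENNReal.toReal_mono (measure_ne_top ν _) (measure_mono inter_subset_right)
    calc ∫ w in Iio (0 : ℝ), (|s w| - min |s (-y)| |s w|) ∂ν
        ≤ (ν (Iio (0 : ℝ) ∩ Iic (-y))).toReal * M := heval ▸ hle
      _ ≤ (ν (Iic (-y))).toReal * M := mul_le_mul_of_nonneg_right hmeas hMpos.le
      _ = M * (ν (Iic (-y))).toReal := mul_comm _ _
  -- denominators
  have hden : ∀ z y : ℝ, 0 < z → 0 < y → 0 < s z - s (-y) := by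
    intro z y hz hy
    have : (-y : ℝ) < z := by linarith
    linarith [hmono this]
  -- slope bounds
  have slope_lb : ∀ z y : ℝ, 0 < z → 0 < y → -1 ≤ slopeYPlus s ν z y := by
    intro z y hz hy
    have hD : 0 < s z - s (-y) := hden z y hz hy
    rw [slopeYPlus, le_div_iff₀ hD]
    have h1 := cY_neg_le (-y) (by linarith)
    have h2 := cY_nonneg z
    have h3 := hs_nonneg z hz.le
    linarith
  have slopeM_ub : ∀ z y : ℝ, 0 < z → 0 < y → slopeYMinus s ν z y ≤ 1 := by
    intro z y hz hy
    have hD : 0 < s y - s (-z) := hden y z hy hz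
    rw [slopeYMinus, div_le_one hD]
    have h1 := cY_le_s y hy.le
    have h2 := cY_nonneg (-z)
    have h3 : s (-z) < 0 := hs_neg _ (by linarith)
    linarith
  -- characterization of zeta when attained
  have zetaP_eq : ∀ z : ℝ, 0 < z → ∀ y₀, y₀ ∈ argYPlus s ν z →
      zetaPlus s ν z = -slopeYPlus s ν z y₀ := by
    intro z hz y₀ hy₀
    rw [zetaPlus, if_pos ⟨y₀, hy₀⟩]
    congr 1
    refine le_antisymm (csInf_le ⟨-1, ?_⟩ ⟨y₀, hy₀.1, rfl⟩) (le_csInf ⟨_, ⟨y₀, hy₀.1, rfl⟩⟩ ?_)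
    · rintro _ ⟨x, hx, rfl⟩; exact slope_lb z x hz hx
    · rintro _ ⟨x, hx, rfl⟩; exact hy₀.2 x hx
  have zetaM_eq : ∀ z : ℝ, 0 < z → ∀ y₀, y₀ ∈ argYMinus s ν z →
      zetaMinus s ν z = slopeYMinus s ν z y₀ := by
    intro z hz y₀ hy₀
    rw [zetaMinus, if_pos ⟨y₀, hy₀⟩]
    refine le_antisymm (csSup_le ⟨_, ⟨y₀, hy₀.1, rfl⟩⟩ ?_) (le_csSup ⟨1, ?_⟩ ⟨y₀, hy₀.1, rfl⟩)
    · rintro _ ⟨x, hx, rfl⟩; exact hy₀.2 x hx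
    · rintro _ ⟨x, hx, rfl⟩; exact slopeM_ub z x hz hx
  -- small tails
  have tend_left : ∀ δ : ℝ, 0 < δ → ∃ y : ℝ, 0 < y ∧ M * (ν (Iic (-y))).toReal < δ := by
    intro δ hδ
    have hinter : ⋂ n : ℕ, Iic (-(n : ℝ)) = ∅ := by
      ext x
      simp only [mem_iInter, mem_Iic, mem_empty_iff_false, iff_false, not_forall, not_le]
      obtain ⟨n, hn⟩ := exists_nat_gt (-x)
      exact ⟨n, by linarith⟩
    have hanti : Antitone fun n : ℕ => Iic (-(n : ℝ)) := by
      intro i j hij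
      exact Iic_subset_Iic.2 (by exact_mod_cast neg_le_neg (Nat.cast_le.2 hij))
    have htend := tendsto_measure_iInter_atTop
      (fun n : ℕ => (measurableSet_Iic : MeasurableSet (Iic (-(n : ℝ)))).nullMeasurableSet)
      hanti ⟨0, measure_ne_top ν _⟩
    rw [hinter, measure_empty] at htend
    have htend2 : Tendsto (fun n : ℕ => M * (ν (Iic (-(n : ℝ)))).toReal) atTop (𝓝 0) := by
      have h3 := (ENNReal.tendsto_toReal (a := 0) (by simp)).comp htend
      simpa using h3.const_mul M
    obtain ⟨N, hN⟩ := (htend2.eventually_lt_const hδ).exists_forall_of_atTop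
    exact ⟨((N + 1 : ℕ) : ℝ), by positivity, hN (N + 1) (Nat.le_succ N)⟩
  have tend_right : ∀ δ : ℝ, 0 < δ → ∃ y : ℝ, 0 < y ∧ M * (ν (Ici y)).toReal < δ := by
    intro δ hδ
    have hinter : ⋂ n : ℕ, Ici ((n : ℝ)) = ∅ := by
      ext x
      simp only [mem_iInter, mem_Ici, mem_empty_iff_false, iff_false, not_forall, not_le]
      obtain ⟨n, hn⟩ := exists_nat_gt x
      exact ⟨n, hn⟩
    have hanti : Antitone fun n : ℕ => Ici ((n : ℝ)) := by
      intro i j hij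
      exact Ici_subset_Ici.2 (by exact_mod_cast Nat.cast_le.2 hij)
    have htend := tendsto_measure_iInter_atTop
      (fun n : ℕ => (measurableSet_Ici : MeasurableSet (Ici ((n : ℝ)))).nullMeasurableSet)
      hanti ⟨0, measure_ne_top ν _⟩
    rw [hinter, measure_empty] at htend
    have htend2 : Tendsto (fun n : ℕ => M * (ν (Ici ((n : ℝ)))).toReal) atTop (𝓝 0) := by
      have h3 := (ENNReal.tendsto_toReal (a := 0) (by simp)).comp htend
      simpa using h3.const_mul M
    obtain ⟨N, hN⟩ := (htend2.eventually_lt_const hδ).exists_forall_of_atTop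
    exact ⟨((N + 1 : ℕ) : ℝ), by positivity, hN (N + 1) (Nat.le_succ N)⟩
  -- nonnegativity of zeta
  have zetaP_nonneg : ∀ z : ℝ, 0 < z → 0 ≤ zetaPlus s ν z := by
    intro z hz
    by_cases hne : (argYPlus s ν z).Nonempty
    · obtain ⟨y₀, hy₀⟩ := hne
      rw [zetaP_eq z hz y₀ hy₀, neg_nonneg]
      by_contra hcon
      push_neg at hcon
      have hszpos : 0 < s z := by rw [← hs0]; exact hmono hz
      obtain ⟨y, hy, hsmall⟩ := tend_left (slopeYPlus s ν z y₀ * s z) (mul_pos hcon hszpos)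
      have hD : 0 < s z - s (-y) := hden z y hz hy
      have hle : slopeYPlus s ν z y₀ ≤ slopeYPlus s ν z y := hy₀.2 y hy
      have h1 : slopeYPlus s ν z y₀ * (s z - s (-y)) ≤ cY s ν z - cY s ν (-y) := by
        rw [slopeYPlus] at hle
        exact (le_div_iff₀ hD).1 hle
      have h2 : slopeYPlus s ν z y₀ * s z ≤ slopeYPlus s ν z y₀ * (s z - s (-y)) := by
        have hsy : s (-y) < 0 := hs_neg _ (by linarith)
        nlinarith
      have h3 : cY s ν z - cY s ν (-y) ≤ m - cY s ν (-y) := by linarith [cY_le_m z]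
      have h4 : m - cY s ν (-y) ≤ M * (ν (Iic (-y))).toReal := tailB y hy
      linarith
    · rw [zetaPlus, if_neg hne]
  have zetaM_nonneg : ∀ z : ℝ, 0 < z → 0 ≤ zetaMinus s ν z := by
    intro z hz
    by_cases hne : (argYMinus s ν z).Nonempty
    · obtain ⟨y₀, hy₀⟩ := hne
      rw [zetaM_eq z hz y₀ hy₀]
      by_contra hcon
      push_neg at hcon
      have hd : 0 < -s (-z) := by
        have := hs_neg (-z) (by linarith); linarith
      obtain ⟨y, hy, hsmall⟩ := tend_right (-slopeYMinus s ν z y₀ * -s (-z))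
        (mul_pos (by linarith) hd)
      have hD : 0 < s y - s (-z) := hden y z hy hz
      have hle : slopeYMinus s ν z y ≤ slopeYMinus s ν z y₀ := hy₀.2 y hy
      have h1 : cY s ν y - cY s ν (-z) ≤ slopeYMinus s ν z y₀ * (s y - s (-z)) := by
        rw [slopeYMinus] at hle
        exact (div_le_iff₀ hD).1 hle
      have h2 : slopeYMinus s ν z y₀ * (s y - s (-z)) ≤ slopeYMinus s ν z y₀ * -s (-z) := by
        have hsy : 0 < s y := by rw [← hs0]; exact hmono hy
        nlinarith
      have h3 : m - cY s ν y ≤ M * (ν (Ici y)).toReal := by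
        have h4 : m - cY s ν y ≤ M * (ν (Ici y)).toReal := by
          have := tailA y hy; exact this
        exact h4
      have h5 : cY s ν (-z) ≤ m := cY_le_m _
      linarith
    · rw [zetaMinus, if_neg hne]
  -- zeta at most one
  have zetaP_le_one : ∀ z : ℝ, 0 < z → zetaPlus s ν z ≤ 1 := by
    intro z hz
    by_cases hne : (argYPlus s ν z).Nonempty
    · obtain ⟨y₀, hy₀⟩ := hne
      rw [zetaP_eq z hz y₀ hy₀]
      linarith [slope_lb z y₀ hz hy₀.1]
    · rw [zetaPlus, if_neg hne]; norm_num
  have zetaM_le_one : ∀ z : ℝ, 0 < z → zetaMinus s ν z ≤ 1 := by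
    intro z hz
    by_cases hne : (argYMinus s ν z).Nonempty
    · obtain ⟨y₀, hy₀⟩ := hne
      rw [zetaM_eq z hz y₀ hy₀]
      exact slopeM_ub z y₀ hz hy₀.1
    · rw [zetaMinus, if_neg hne]; norm_num
  -- zeta tail bounds for z ≥ 1
  have zetaP_tail : ∀ z : ℝ, 1 ≤ z → zetaPlus s ν z ≤ (M / s 1) * (ν (Ici z)).toReal := by
    intro z hz1
    have hz : (0 : ℝ) < z := lt_of_lt_of_le one_pos hz1
    have hRHS : 0 ≤ (M / s 1) * (ν (Ici z)).toReal :=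
      mul_nonneg (div_nonneg hMpos.le hs1.le) ENNReal.toReal_nonneg
    by_cases hne : (argYPlus s ν z).Nonempty
    · obtain ⟨y₀, hy₀⟩ := hne
      rw [zetaP_eq z hz y₀ hy₀]
      have hD : 0 < s z - s (-y₀) := hden z y₀ hz hy₀.1
      have heq : -slopeYPlus s ν z y₀ = (cY s ν (-y₀) - cY s ν z) / (s z - s (-y₀)) := by
        rw [slopeYPlus, ← neg_div]; ring_nf
      rw [heq]
      rcases le_or_gt (cY s ν (-y₀) - cY s ν z) 0 with hN | hN
      · exact le_trans (div_nonpos_iff.2 (Or.inr ⟨hN, hD.le⟩)) hRHS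
      · rw [div_le_iff₀ hD]
        have hNle : cY s ν (-y₀) - cY s ν z ≤ M * (ν (Ici z)).toReal :=
          le_trans (by linarith [cY_le_m (-y₀)]) (tailA z hz)
        have hs1z : s 1 ≤ s z - s (-y₀) := by
          have h1 : s 1 ≤ s z := hmono.monotone hz1
          have h2 : s (-y₀) < 0 := hs_neg _ (by linarith [hy₀.1])
          linarith
        have hkey : M * (ν (Ici z)).toReal ≤ (M / s 1) * (ν (Ici z)).toReal * (s z - s (-y₀)) := by
          have h3 : (M / s 1) * (ν (Ici z)).toReal * s 1 = M * (ν (Ici z)).toReal := by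
            field_simp
          calc M * (ν (Ici z)).toReal = (M / s 1) * (ν (Ici z)).toReal * s 1 := h3.symm
            _ ≤ (M / s 1) * (ν (Ici z)).toReal * (s z - s (-y₀)) :=
              mul_le_mul_of_nonneg_left hs1z hRHS
        linarith
    · rw [zetaPlus, if_neg hne]; exact hRHS
  have zetaM_tail : ∀ z : ℝ, 1 ≤ z →
      zetaMinus s ν z ≤ (M / (-s (-1))) * (ν (Iic (-z))).toReal := by
    intro z hz1
    have hz : (0 : ℝ) < z := lt_of_lt_of_le one_pos hz1
    have hd1 : 0 < -s (-1) := by linarith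
    have hRHS : 0 ≤ (M / (-s (-1))) * (ν (Iic (-z))).toReal :=
      mul_nonneg (div_nonneg hMpos.le hd1.le) ENNReal.toReal_nonneg
    by_cases hne : (argYMinus s ν z).Nonempty
    · obtain ⟨y₀, hy₀⟩ := hne
      rw [zetaM_eq z hz y₀ hy₀]
      have hD : 0 < s y₀ - s (-z) := hden y₀ z hy₀.1 hz
      rw [slopeYMinus]
      rcases le_or_gt (cY s ν y₀ - cY s ν (-z)) 0 with hN | hN
      · exact le_trans (div_nonpos_iff.2 (Or.inr ⟨hN, hD.le⟩)) hRHS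
      · rw [div_le_iff₀ hD]
        have hNle : cY s ν y₀ - cY s ν (-z) ≤ M * (ν (Iic (-z))).toReal :=
          le_trans (by linarith [cY_le_m y₀]) (tailB z hz)
        have hs1z : -s (-1) ≤ s y₀ - s (-z) := by
          have h1 : s (-z) ≤ s (-1) := hmono.monotone (by linarith)
          have h2 : 0 < s y₀ := by rw [← hs0]; exact hmono hy₀.1
          linarith
        have hkey : M * (ν (Iic (-z))).toReal ≤
            (M / (-s (-1))) * (ν (Iic (-z))).toReal * (s y₀ - s (-z)) := by
          have h3 : (M / (-s (-1))) * (ν (Iic (-z))).toReal * (-s (-1)) =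
              M * (ν (Iic (-z))).toReal := by
            have hne' : s (-1) ≠ 0 := by linarith
            field_simp
          calc M * (ν (Iic (-z))).toReal
              = (M / (-s (-1))) * (ν (Iic (-z))).toReal * (-s (-1)) := h3.symm
            _ ≤ (M / (-s (-1))) * (ν (Iic (-z))).toReal * (s y₀ - s (-z)) :=
              mul_le_mul_of_nonneg_left hs1z hRHS
        linarith
    · rw [zetaMinus, if_neg hne]; exact hRHS
  -- measurability for the ENNReal stage
  have mTr : Measurable fun z : ℝ => ν (Ici z) :=
    Antitone.measurable (fun i j hij => measure_mono (Ici_subset_Ici.2 hij))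
  have mTl : Measurable fun z : ℝ => ν (Iic (-z)) := by
    have h1 : Monotone fun z : ℝ => ν (Iic z) := fun i j hij => measure_mono (Iic_subset_Iic.2 hij)
    exact h1.measurable.comp measurable_neg
  have mF : Measurable fun z : ℝ => ENNReal.ofReal (z ^ (p - 1)) :=
    ENNReal.measurable_ofReal.comp (measurable_id.pow_const (p - 1))
  -- layer cake
  set J : ℝ≥0∞ := ∫⁻ z in Ioi (0 : ℝ),
    (ν (Ici z) + ν (Iic (-z))) * ENNReal.ofReal (z ^ (p - 1)) with hJdef
  have lc : ∫⁻ y, ENNReal.ofReal (|y| ^ p) ∂ν = ENNReal.ofReal p * J := by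
    rw [lintegral_rpow_eq_lintegral_meas_le_mul ν (ae_of_all _ fun y => abs_nonneg y)
      measurable_abs.aemeasurable hp, hJdef]
    congr 1
    refine setLIntegral_congr_fun measurableSet_Ioi ?_
    intro z hz
    have hz' : (0 : ℝ) < z := hz
    have hset : {a : ℝ | z ≤ |a|} = Ici z ∪ Iic (-z) := by
      ext x
      simp only [mem_setOf_eq, mem_union, mem_Ici, mem_Iic, le_abs, le_neg]
    have hdisj : Disjoint (Ici z) (Iic (-z)) := by
      rw [Set.disjoint_left]
      intro x hx1 hx2
      simp only [mem_Ici] at hx1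
      simp only [mem_Iic] at hx2
      linarith
    dsimp only
    rw [hset, measure_union hdisj measurableSet_Iic]
  have hJ_iff : (∫⁻ y, ENNReal.ofReal (|y| ^ p) ∂ν < ⊤) ↔ J < ⊤ := by
    rw [lc]
    constructor
    · intro h
      exact ENNReal.lt_top_of_mul_ne_top_right h.ne (by simp [hp])
    · intro h
      exact ENNReal.mul_lt_top ENNReal.ofReal_lt_top h
  -- lower bound
  have lower : J ≤ ∫⁻ z in Ioi (0 : ℝ), ENNReal.ofReal
      (z ^ (p - 1) * (nuPlus s ν z + nuMinus s ν z)) := by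
    rw [hJdef]
    refine lintegral_mono_ae ?_
    rw [ae_restrict_iff' measurableSet_Ioi]
    refine ae_of_all _ fun z hz => ?_
    have hz' : (0 : ℝ) < z := hz
    rw [ENNReal.ofReal_mul (Real.rpow_nonneg hz'.le _)]
    rw [mul_comm (ENNReal.ofReal (z ^ (p - 1)))]
    apply mul_le_mul_left
    calc ν (Ici z) + ν (Iic (-z))
        = ENNReal.ofReal ((ν (Ici z)).toReal + (ν (Iic (-z))).toReal) := by
          rw [ENNReal.ofReal_add ENNReal.toReal_nonneg ENNReal.toReal_nonneg,
            ENNReal.ofReal_toReal (measure_ne_top ν _), ENNReal.ofReal_toReal (measure_ne_top ν _)]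
      _ ≤ ENNReal.ofReal (nuPlus s ν z + nuMinus s ν z) := by
          apply ENNReal.ofReal_le_ofReal
          have h2 := zetaP_nonneg z hz'
          have h3 := zetaM_nonneg z hz'
          simp only [nuPlus, nuMinus]
          linarith
  -- upper bound
  have KPnn : 0 ≤ M / s 1 := div_nonneg hMpos.le hs1.le
  have KMnn : 0 ≤ M / (-s (-1)) := div_nonneg hMpos.le (by linarith)
  set C : ℝ := 1 + M / s 1 + M / (-s (-1)) with hCdef
  have hCnn : 0 ≤ C := by rw [hCdef]; linarith
  have pointwise : ∀ z : ℝ, z ∈ Ioi (0 : ℝ) →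
      ENNReal.ofReal (z ^ (p - 1) * (nuPlus s ν z + nuMinus s ν z)) ≤
        ENNReal.ofReal C * ((ν (Ici z) + ν (Iic (-z))) * ENNReal.ofReal (z ^ (p - 1)))
          + (Ioc (0 : ℝ) 1).indicator (fun w => 4 * ENNReal.ofReal (w ^ (p - 1))) z := by
    intro z hz
    have hz' : (0 : ℝ) < z := hz
    rw [ENNReal.ofReal_mul (Real.rpow_nonneg hz'.le _)]
    rcases le_or_gt z 1 with hz1 | hz1
    · have hmem : z ∈ Ioc (0 : ℝ) 1 := ⟨hz', hz1⟩
      rw [indicator_of_mem hmem]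
      have hle : ENNReal.ofReal (z ^ (p - 1)) * ENNReal.ofReal (nuPlus s ν z + nuMinus s ν z) ≤
          4 * ENNReal.ofReal (z ^ (p - 1)) := by
        rw [mul_comm]
        refine mul_le_mul_left ?_ _
        calc ENNReal.ofReal (nuPlus s ν z + nuMinus s ν z) ≤ ENNReal.ofReal 4 := by
              apply ENNReal.ofReal_le_ofReal
              have h1 := zetaP_le_one z hz'
              have h2 := zetaM_le_one z hz'
              have h3 := hprob (Ici z)
              have h4 := hprob (Iic (-z))
              simp only [nuPlus, nuMinus]
              linarith
          _ = 4 := by norm_num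
      exact le_add_left hle
    · rw [indicator_of_notMem (fun h => absurd h.2 (not_le.2 hz1)), add_zero]
      have h1 := zetaP_tail z hz1.le
      have h2 := zetaM_tail z hz1.le
      have htr : (0 : ℝ) ≤ (ν (Ici z)).toReal := ENNReal.toReal_nonneg
      have htl : (0 : ℝ) ≤ (ν (Iic (-z))).toReal := ENNReal.toReal_nonneg
      have key : nuPlus s ν z + nuMinus s ν z ≤ C * ((ν (Ici z)).toReal + (ν (Iic (-z))).toReal) := by
        simp only [nuPlus, nuMinus, hCdef]
        nlinarith [mul_nonneg KPnn htl, mul_nonneg KMnn htr]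
      calc ENNReal.ofReal (z ^ (p - 1)) * ENNReal.ofReal (nuPlus s ν z + nuMinus s ν z)
          ≤ ENNReal.ofReal (z ^ (p - 1)) *
              ENNReal.ofReal (C * ((ν (Ici z)).toReal + (ν (Iic (-z))).toReal)) :=
            mul_le_mul_right (ENNReal.ofReal_le_ofReal key) _
        _ = ENNReal.ofReal C * ((ν (Ici z) + ν (Iic (-z))) * ENNReal.ofReal (z ^ (p - 1))) := by
            rw [ENNReal.ofReal_mul hCnn,
              ENNReal.ofReal_add ENNReal.toReal_nonneg ENNReal.toReal_nonneg,
              ENNReal.ofReal_toReal (measure_ne_top ν _),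
              ENNReal.ofReal_toReal (measure_ne_top ν _)]
            ring
  have meas1 : Measurable fun z : ℝ =>
      ENNReal.ofReal C * ((ν (Ici z) + ν (Iic (-z))) * ENNReal.ofReal (z ^ (p - 1))) :=
    ((mTr.add mTl).mul mF).const_mul _
  have ind_fin : ∫⁻ z in Ioi (0 : ℝ),
      (Ioc (0 : ℝ) 1).indicator (fun w => 4 * ENNReal.ofReal (w ^ (p - 1))) z < ⊤ := by
    rw [lintegral_indicator measurableSet_Ioc, Measure.restrict_restrict measurableSet_Ioc,
      inter_eq_self_of_subset_left Ioc_subset_Ioi_self,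
      lintegral_const_mul _ mF]
    refine ENNReal.mul_lt_top (by norm_num) ?_
    have hint : IntegrableOn (fun z : ℝ => z ^ (p - 1)) (Ioc (0 : ℝ) 1) volume :=
      (intervalIntegrable_iff_integrableOn_Ioc_of_le zero_le_one).1
        (intervalIntegral.intervalIntegrable_rpow' (by linarith))
    refine lt_of_le_of_lt (lintegral_mono fun z => ?_) hint.2
    exact Real.ofReal_le_enorm _
  have upper : (∫⁻ z in Ioi (0 : ℝ), ENNReal.ofReal
      (z ^ (p - 1) * (nuPlus s ν z + nuMinus s ν z))) ≤
      ENNReal.ofReal C * J + ∫⁻ z in Ioi (0 : ℝ),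
        (Ioc (0 : ℝ) 1).indicator (fun w => 4 * ENNReal.ofReal (w ^ (p - 1))) z := by
    calc (∫⁻ z in Ioi (0 : ℝ), ENNReal.ofReal
        (z ^ (p - 1) * (nuPlus s ν z + nuMinus s ν z)))
        ≤ ∫⁻ z in Ioi (0 : ℝ),
            (ENNReal.ofReal C * ((ν (Ici z) + ν (Iic (-z))) * ENNReal.ofReal (z ^ (p - 1)))
              + (Ioc (0 : ℝ) 1).indicator (fun w => 4 * ENNReal.ofReal (w ^ (p - 1))) z) := by
          refine lintegral_mono_ae ?_
          rw [ae_restrict_iff' measurableSet_Ioi]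
          exact ae_of_all _ pointwise
      _ = (∫⁻ z in Ioi (0 : ℝ),
            ENNReal.ofReal C * ((ν (Ici z) + ν (Iic (-z))) * ENNReal.ofReal (z ^ (p - 1))))
          + ∫⁻ z in Ioi (0 : ℝ),
            (Ioc (0 : ℝ) 1).indicator (fun w => 4 * ENNReal.ofReal (w ^ (p - 1))) z :=
          lintegral_add_left meas1 _
      _ = ENNReal.ofReal C * J + ∫⁻ z in Ioi (0 : ℝ),
            (Ioc (0 : ℝ) 1).indicator (fun w => 4 * ENNReal.ofReal (w ^ (p - 1))) z := by
          rw [hJdef, lintegral_const_mul _ (by exact (mTr.add mTl).mul mF)]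
  constructor
  · intro hL
    exact hJ_iff.2 (lt_of_le_of_lt lower hL)
  · intro hR
    have hJfin : J < ⊤ := hJ_iff.1 hR
    refine lt_of_le_of_lt upper ?_
    exact ENNReal.add_lt_top.2 ⟨ENNReal.mul_lt_top ENNReal.ofReal_lt_top hJfin, ind_fin⟩
end
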